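/- Under the same hypotheses, each segmental Lagrange basis polynomial ℓ̂_{s_j} is strictly positive on its own segment s_j. -/

import Mathlib

open Polynomial intervalIntegral

/-- If a continuous function has zero integral over a nondegenerate interval,
it has a zero in the open interval. -/
lemma exists_zero_of_integral_eq_zero {f : ℝ → ℝ} (hf : Continuous f) {a b : ℝ} (hab : a < b)
    (h : (∫ x in a..b, f x) = 0) : ∃ x ∈ Set.Ioo a b, f x = 0 := by
  by_contra hc
  push_neg at hc
  have hmid : (a + b) / 2 ∈ Set.Ioo a b := ⟨by linarith, by linarith⟩
  have hsign : (∀ x ∈ Set.Ioo a b, 0 < f x) ∨ (∀ x ∈ Set.Ioo a b, f x < 0) := by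
    rcases lt_or_gt_of_ne (hc _ hmid) with hneg | hpos
    · right
      intro x hx
      by_contra hx0
      push_neg at hx0
      have hx0' : 0 < f x := lt_of_le_of_ne hx0 (Ne.symm (hc x hx))
      have hmem : (0 : ℝ) ∈ Set.uIcc (f x) (f ((a + b) / 2)) :=
        Set.mem_uIcc.mpr (Or.inr ⟨le_of_lt hneg, le_of_lt hx0'⟩)
      obtain ⟨z, hz, hz0⟩ := intermediate_value_uIcc (hf.continuousOn) hmem
      have hzI : z ∈ Set.Ioo a b := Set.ordConnected_Ioo.uIcc_subset hx hmid hz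
      exact hc z hzI hz0
    · left
      intro x hx
      by_contra hx0
      push_neg at hx0
      have hx0' : f x < 0 := lt_of_le_of_ne hx0 (hc x hx)
      have hmem : (0 : ℝ) ∈ Set.uIcc (f x) (f ((a + b) / 2)) :=
        Set.mem_uIcc.mpr (Or.inl ⟨le_of_lt hx0', le_of_lt hpos⟩)
      obtain ⟨z, hz, hz0⟩ := intermediate_value_uIcc (hf.continuousOn) hmem
      have hzI : z ∈ Set.Ioo a b := Set.ordConnected_Ioo.uIcc_subset hx hmid hz
      exact hc z hzI hz0
  rcases hsign with hpos | hneg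
  · have := intervalIntegral.intervalIntegral_pos_of_pos_on
      (hf.intervalIntegrable a b) hpos hab
    linarith
  · have := intervalIntegral.intervalIntegral_pos_of_pos_on
      ((hf.neg).intervalIntegrable a b) (fun x hx => neg_pos.mpr (hneg x hx)) hab
    simp only [Pi.neg_apply] at this
    rw [intervalIntegral.integral_neg] at this
    linarith

/-- For a unisolvent set of segments in [-1,1], disjoint in measure,
each segmental Lagrange basis polynomial is strictly positive on its own segment. -/
theorem stmt1 (r : ℕ) (hr : 0 < r) (α β : Fin r → ℝ)
    (hI : ∀ i, -1 ≤ α i ∧ β i ≤ 1) (hlen : ∀ i, α i < β i)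
    (horder : ∀ i j : Fin r, i < j → β i ≤ α j)
    (huni : ∀ p : Polynomial ℝ, p.degree < (r : ℕ) →
      (∀ i, (∫ x in (α i)..(β i), p.eval x) = 0) → p = 0)
    (ℓ : Fin r → Polynomial ℝ) (hdeg : ∀ j, (ℓ j).degree < (r : ℕ))
    (hdual : ∀ i j, (∫ x in (α i)..(β i), (ℓ j).eval x) = if i = j then 1 else 0) :
    ∀ j : Fin r, ∀ x ∈ Set.Icc (α j) (β j), 0 < (ℓ j).eval x := by
  classical
  intro j x hx
  have hint1 : (∫ t in (α j)..(β j), (ℓ j).eval t) = 1 := by simpa using hdual j j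
  have hcont : Continuous fun t => (ℓ j).eval t := Polynomial.continuous _
  have hroot : ∀ i : Fin r, i ≠ j → ∃ y ∈ Set.Ioo (α i) (β i), (ℓ j).eval y = 0 := by
    intro i hi
    apply exists_zero_of_integral_eq_zero hcont (hlen i)
    simpa [hi] using hdual i j
  -- no zero of ℓ j on Icc (α j) (β j)
  have hnz : ∀ z ∈ Set.Icc (α j) (β j), (ℓ j).eval z ≠ 0 := by
    intro z hz hz0
    set g : Fin r → ℝ := fun i => if h : i = j then z else Classical.choose (hroot i h)
    have hgIoo : ∀ i, (h : i ≠ j) →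
        g i ∈ Set.Ioo (α i) (β i) ∧ (ℓ j).eval (g i) = 0 := by
      intro i h
      have hs := Classical.choose_spec (hroot i h)
      obtain ⟨hmem, hev⟩ := hs
      simp only [g, dif_neg h]; exact ⟨hmem, hev⟩
    have hgj : g j = z := by simp [g]
    have hgmem : ∀ i, g i ∈ Set.Icc (α i) (β i) := by
      intro i
      by_cases h : i = j
      · subst h; rw [hgj]; exact hz
      · exact Set.Ioo_subset_Icc_self (hgIoo i h).1
    have heval : ∀ i, (ℓ j).eval (g i) = 0 := by
      intro i
      by_cases h : i = j
      · subst h; rw [hgj]; exact hz0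
      · exact (hgIoo i h).2
    have hmono : StrictMono g := by
      intro i k hik
      by_cases hk : k = j
      · have hi' : i ≠ j := by
          rintro rfl
          exact absurd hik (by rw [hk]; exact lt_irrefl _)
        calc g i < β i := (hgIoo i hi').1.2
          _ ≤ α k := horder i k hik
          _ ≤ g k := (hgmem k).1
      · calc g i ≤ β i := (hgmem i).2
          _ ≤ α k := horder i k hik
          _ < g k := (hgIoo k hk).1.1
    have hzero : ℓ j = 0 := by
      by_cases h0 : ℓ j = 0
      · exact h0
      · apply Polynomial.eq_zero_of_natDegree_lt_card_of_eval_eq_zero (ℓ j) hmono.injective heval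
        rw [Fintype.card_fin]
        exact (Polynomial.natDegree_lt_iff_degree_lt h0).mpr (hdeg j)
    rw [hzero] at hint1
    simp at hint1
  -- sign fixed positive on Icc
  by_contra hle
  push_neg at hle
  have hxneg : (ℓ j).eval x < 0 := lt_of_le_of_ne hle (hnz x hx)
  have hallneg : ∀ y ∈ Set.Icc (α j) (β j), (ℓ j).eval y < 0 := by
    intro y hy
    by_contra hy0
    push_neg at hy0
    have hy' : 0 < (ℓ j).eval y := lt_of_le_of_ne hy0 (Ne.symm (hnz y hy))
    have hmem : (0 : ℝ) ∈ Set.uIcc ((ℓ j).eval x) ((ℓ j).eval y) :=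
      Set.mem_uIcc.mpr (Or.inl ⟨le_of_lt hxneg, le_of_lt hy'⟩)
    obtain ⟨w, hw, hw0⟩ := intermediate_value_uIcc (hcont.continuousOn) hmem
    have hwI : w ∈ Set.Icc (α j) (β j) := Set.ordConnected_Icc.uIcc_subset hx hy hw
    exact hnz w hwI hw0
  have hposint := intervalIntegral.intervalIntegral_pos_of_pos_on
    ((hcont.neg).intervalIntegrable (α j) (β j))
    (fun t ht => neg_pos.mpr (hallneg t (Set.Ioo_subset_Icc_self ht))) (hlen j)
  simp only [Pi.neg_apply] at hposint
  rw [intervalIntegral.integral_neg] at hposint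
  linarith
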